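/- Let p > 1 be a real number, let d' ≥ 2, let c = 1/(1 + (d'−1)^{1/(p−1)}), and let r = ((d'−1)c^p + (1−c)^p)^{1/p}. Let e_1,…,e_{d'+1} be the standard basis vectors of ℝ^{d'+1}. Suppose x ∈ ℝ^{d'+1} satisfies ||x||_p ≤ c·(d')^{1/p}, and there are signs s_1,…,s_{d'} ∈ {−1, +1} such that ||x − s_i e_i||_p ≤ r for every i ∈ {1,…,d'}. Then x_i = s_i·c for every i ∈ {1,…,d'} and x_{d'+1} = 0. -/

import Mathlib

open Set Filter

private lemma aux_abs_deriv (p : ℝ) (_hp : 1 < p) {u : ℝ} (hu : u ≠ 0) :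
    HasDerivAt (fun t : ℝ => |t| ^ p) (Real.sign u * (p * |u| ^ (p - 1))) u := by
  rcases hu.lt_or_gt with h | h
  · have h1 : HasDerivAt (fun t : ℝ => (-t) ^ p) (p * (-u) ^ (p - 1) * (-1)) u :=
      (Real.hasDerivAt_rpow_const (p := p)
        (Or.inl (ne_of_gt (neg_pos.mpr h)))).comp u (hasDerivAt_neg u)
    have h2 : (fun t : ℝ => |t| ^ p) =ᶠ[nhds u] fun t : ℝ => (-t) ^ p := by
      filter_upwards [Iio_mem_nhds h] with t ht
      rw [abs_of_neg ht]
    have h3 := h1.congr_of_eventuallyEq h2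
    refine h3.congr_deriv ?_
    rw [Real.sign_of_neg h, abs_of_neg h]; ring
  · have h1 : HasDerivAt (fun t : ℝ => t ^ p) (p * u ^ (p - 1)) u :=
      Real.hasDerivAt_rpow_const (Or.inl (ne_of_gt h))
    have h2 : (fun t : ℝ => |t| ^ p) =ᶠ[nhds u] fun t : ℝ => t ^ p := by
      filter_upwards [Ioi_mem_nhds h] with t ht
      rw [abs_of_pos ht]
    have h3 := h1.congr_of_eventuallyEq h2
    refine h3.congr_deriv ?_
    rw [Real.sign_of_pos h, abs_of_pos h]; ring

private lemma g_strict (p m cc : ℝ) (hp : 1 < p) (hm : 1 ≤ m)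
    (hcc : cc = 1 / (1 + m ^ ((1 : ℝ) / (p - 1)))) {u : ℝ} (hu : u ≠ cc) :
    (1 - cc) ^ p + m * cc ^ p < |1 - u| ^ p + m * |u| ^ p := by
  have hp1 : (0 : ℝ) < p - 1 := by linarith
  have hp0 : (0 : ℝ) < p := by linarith
  set M : ℝ := m ^ ((1 : ℝ) / (p - 1)) with hM
  have hM1 : 1 ≤ M := Real.one_le_rpow hm (by positivity)
  have hM0 : 0 < M := by linarith
  have hcc0 : 0 < cc := by rw [hcc]; positivity
  have hcc1 : cc < 1 := by
    rw [hcc, div_lt_one (by linarith)]; linarith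
  have hkey : cc * (1 + M) = 1 := by rw [hcc]; field_simp
  have hMm : M ^ (p - 1) = m := by
    rw [hM, one_div]; exact Real.rpow_inv_rpow (by linarith) (ne_of_gt hp1)
  set g : ℝ → ℝ := fun t => |1 - t| ^ p + m * |t| ^ p with hg
  have hcont : Continuous g := by
    have h1 : Continuous fun t : ℝ => |t| ^ p :=
      continuous_abs.rpow_const (fun t => Or.inr hp0.le)
    have h2 : Continuous fun t : ℝ => |1 - t| ^ p :=
      ((continuous_const.sub continuous_id).abs).rpow_const (fun t => Or.inr hp0.le)
    exact h2.add (continuous_const.mul h1)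
  have hder : ∀ v : ℝ, v ≠ 0 → v ≠ 1 →
      HasDerivAt g (Real.sign (1 - v) * (p * |1 - v| ^ (p - 1)) * (-1)
        + m * (Real.sign v * (p * |v| ^ (p - 1)))) v := by
    intro v h0 h1
    have ha : HasDerivAt (fun t : ℝ => |1 - t| ^ p)
        (Real.sign (1 - v) * (p * |1 - v| ^ (p - 1)) * (-1)) v :=
      (aux_abs_deriv p hp (sub_ne_zero.mpr (Ne.symm h1))).comp v
        ((hasDerivAt_id v).const_sub 1)
    have hb : HasDerivAt (fun t : ℝ => m * |t| ^ p)
        (m * (Real.sign v * (p * |v| ^ (p - 1)))) v :=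
      (aux_abs_deriv p hp h0).const_mul m
    exact ha.add hb
  have hmono1 : StrictMonoOn g (Set.Icc cc 1) := by
    apply strictMonoOn_of_deriv_pos (convex_Icc _ _) hcont.continuousOn
    intro v hv
    rw [interior_Icc] at hv
    obtain ⟨hv1, hv2⟩ := hv
    have h0 : (0 : ℝ) < v := lt_trans hcc0 hv1
    rw [(hder v (ne_of_gt h0) (ne_of_lt hv2)).deriv, Real.sign_of_pos (by linarith : (0:ℝ) < 1 - v),
      Real.sign_of_pos h0, abs_of_pos (by linarith : (0:ℝ) < 1 - v), abs_of_pos h0]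
    have hcmp : (1 - v) ^ (p - 1) < m * v ^ (p - 1) := by
      have hb : (1 : ℝ) - v < M * v := by nlinarith
      calc (1 - v) ^ (p - 1) < (M * v) ^ (p - 1) :=
            Real.rpow_lt_rpow (by linarith) hb hp1
        _ = m * v ^ (p - 1) := by rw [Real.mul_rpow hM0.le h0.le, hMm]
    nlinarith [mul_pos hp0 (sub_pos.mpr hcmp)]
  have hmono2 : StrictMonoOn g (Set.Ici (1 : ℝ)) := by
    apply strictMonoOn_of_deriv_pos (convex_Ici _) hcont.continuousOn
    intro v hv
    rw [interior_Ici] at hv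
    have h0 : (0 : ℝ) < v := by linarith [Set.mem_Ioi.mp hv]
    have hv1 : (1 : ℝ) < v := Set.mem_Ioi.mp hv
    rw [(hder v (ne_of_gt h0) (ne_of_gt hv1)).deriv, Real.sign_of_neg (by linarith : 1 - v < 0),
      Real.sign_of_pos h0, abs_of_neg (by linarith : 1 - v < 0), abs_of_pos h0]
    have h1 : 0 < (-(1 - v)) ^ (p - 1) := Real.rpow_pos_of_pos (by linarith) _
    have h2 : 0 < v ^ (p - 1) := Real.rpow_pos_of_pos h0 _
    nlinarith [mul_pos hp0 h1, mul_pos hp0 h2]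
  have hanti1 : StrictAntiOn g (Set.Icc (0 : ℝ) cc) := by
    apply strictAntiOn_of_deriv_neg (convex_Icc _ _) hcont.continuousOn
    intro v hv
    rw [interior_Icc] at hv
    obtain ⟨hv1, hv2⟩ := hv
    have h1v : v < 1 := lt_trans hv2 hcc1
    rw [(hder v (ne_of_gt hv1) (ne_of_lt h1v)).deriv, Real.sign_of_pos (by linarith : (0:ℝ) < 1 - v),
      Real.sign_of_pos hv1, abs_of_pos (by linarith : (0:ℝ) < 1 - v), abs_of_pos hv1]
    have hcmp : m * v ^ (p - 1) < (1 - v) ^ (p - 1) := by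
      have hb : M * v < 1 - v := by nlinarith
      calc m * v ^ (p - 1) = (M * v) ^ (p - 1) := by
            rw [Real.mul_rpow hM0.le hv1.le, hMm]
        _ < (1 - v) ^ (p - 1) := Real.rpow_lt_rpow (by positivity) hb hp1
    nlinarith [mul_pos hp0 (sub_pos.mpr hcmp)]
  have hanti2 : StrictAntiOn g (Set.Iic (0 : ℝ)) := by
    apply strictAntiOn_of_deriv_neg (convex_Iic _) hcont.continuousOn
    intro v hv
    rw [interior_Iic] at hv
    have hv0 : v < 0 := Set.mem_Iio.mp hv
    rw [(hder v (ne_of_lt hv0) (by linarith)).deriv, Real.sign_of_pos (by linarith : (0:ℝ) < 1 - v),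
      Real.sign_of_neg hv0, abs_of_pos (by linarith : (0:ℝ) < 1 - v), abs_of_neg hv0]
    have h1 : 0 < (1 - v) ^ (p - 1) := Real.rpow_pos_of_pos (by linarith) _
    have h2 : 0 < (-v) ^ (p - 1) := Real.rpow_pos_of_pos (by linarith) _
    nlinarith [mul_pos hp0 h1, mul_pos hp0 h2, mul_pos (mul_pos (by linarith : (0:ℝ) < m) hp0) h2]
  have hgcc : g cc = (1 - cc) ^ p + m * cc ^ p := by
    simp only [hg]
    rw [abs_of_pos hcc0, abs_of_pos (by linarith : (0:ℝ) < 1 - cc)]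
  show (1 - cc) ^ p + m * cc ^ p < g u
  rw [← hgcc]
  rcases lt_or_gt_of_ne hu with h | h
  · rcases lt_or_ge u 0 with h0 | h0
    · have a1 : g 0 < g u := hanti2 (Set.mem_Iic.mpr h0.le) (Set.mem_Iic.mpr le_rfl) h0
      have a2 : g cc < g 0 := hanti1 ⟨le_refl 0, hcc0.le⟩ ⟨hcc0.le, le_refl cc⟩ hcc0
      linarith
    · exact hanti1 ⟨h0, h.le⟩ ⟨hcc0.le, le_refl cc⟩ h
  · rcases le_or_gt u 1 with h1 | h1
    · exact hmono1 ⟨le_refl cc, hcc1.le⟩ ⟨h.le, h1⟩ h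
    · have a1 : g cc < g 1 := hmono1 ⟨le_refl cc, hcc1.le⟩ ⟨hcc1.le, le_refl 1⟩ hcc1
      have a2 : g 1 < g u := hmono2 (Set.mem_Ici.mpr le_rfl) (Set.mem_Ici.mpr h1.le) h1
      linarith

set_option maxHeartbeats 1000000 in
theorem stmt_5 (p : ℝ) (hp : 1 < p) (d' : ℕ) (hd' : 2 ≤ d')
    (x : Fin (d' + 1) → ℝ) (s : Fin d' → ℝ) (hs : ∀ i, s i = 1 ∨ s i = -1) :
    let c : ℝ := 1 / (1 + ((d' : ℝ) - 1) ^ ((1 : ℝ) / (p - 1)))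
    let r : ℝ := (((d' : ℝ) - 1) * c ^ p + (1 - c) ^ p) ^ ((1 : ℝ) / p)
    (∑ j : Fin (d' + 1), |x j| ^ p) ^ ((1 : ℝ) / p) ≤ c * (d' : ℝ) ^ ((1 : ℝ) / p) →
    (∀ i : Fin d',
      (∑ j : Fin (d' + 1), |x j - (if (j : ℕ) = (i : ℕ) then s i else 0)| ^ p)
          ^ ((1 : ℝ) / p) ≤ r) →
    (∀ i : Fin d', x (Fin.castSucc i) = s i * c) ∧ x (Fin.last d') = 0 := by
  intro c r h1 h2
  have hc : c = 1 / (1 + ((d' : ℝ) - 1) ^ ((1 : ℝ) / (p - 1))) := rfl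
  have hr : r = (((d' : ℝ) - 1) * c ^ p + (1 - c) ^ p) ^ ((1 : ℝ) / p) := rfl
  clear h1
  have hp0 : (0 : ℝ) < p := by linarith
  have hp1 : (0 : ℝ) < p - 1 := by linarith
  have hd2 : (2 : ℝ) ≤ (d' : ℝ) := by exact_mod_cast hd'
  set m : ℝ := (d' : ℝ) - 1 with hmdef
  have hm1 : (1 : ℝ) ≤ m := by rw [hmdef]; linarith
  have hM1 : (1 : ℝ) ≤ m ^ ((1 : ℝ) / (p - 1)) := Real.one_le_rpow hm1 (by positivity)
  have hc0 : 0 < c := by rw [hc]; positivity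
  have hc1 : c < 1 := by rw [hc, div_lt_one (by linarith)]; linarith
  have hB0 : 0 ≤ m * c ^ p + (1 - c) ^ p :=
    add_nonneg (mul_nonneg (by linarith) (Real.rpow_nonneg hc0.le p))
      (Real.rpow_nonneg (by linarith) p)
  have hrp : r ^ p = m * c ^ p + (1 - c) ^ p := by
    rw [hr, one_div, Real.rpow_inv_rpow hB0 (ne_of_gt hp0)]
  set S : ℝ := ∑ j, |x j| ^ p with hS
  have key1 : ∀ i : Fin d',
      |x (Fin.castSucc i) - s i| ^ p + (S - |x (Fin.castSucc i)| ^ p) ≤ r ^ p := by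
    intro i
    have h2i := h2 i
    set ic := Fin.castSucc i with hic
    have hA : (∑ j : Fin (d' + 1), |x j - (if (j : ℕ) = (i : ℕ) then s i else 0)| ^ p)
        = |x ic - s i| ^ p + (S - |x ic| ^ p) := by
      have e1 : ∀ j : Fin (d' + 1),
          |x j - (if (j : ℕ) = (i : ℕ) then s i else 0)| ^ p
            = |x j - (if j = ic then s i else 0)| ^ p := by
        intro j
        congr 2
        simp [Fin.ext_iff, hic]
      rw [Finset.sum_congr rfl (fun j _ => e1 j)]
      rw [← Finset.sum_erase_add _ _ (Finset.mem_univ ic)]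
      have e2 : ∑ j ∈ Finset.univ.erase ic, |x j - (if j = ic then s i else 0)| ^ p
          = ∑ j ∈ Finset.univ.erase ic, |x j| ^ p := by
        apply Finset.sum_congr rfl
        intro j hj
        rw [if_neg (Finset.ne_of_mem_erase hj), sub_zero]
      have e3 : S = (∑ j ∈ Finset.univ.erase ic, |x j| ^ p) + |x ic| ^ p :=
        (Finset.sum_erase_add _ _ (Finset.mem_univ ic)).symm
      rw [e2, if_pos rfl, e3]
      ring
    have hA0 : 0 ≤ ∑ j : Fin (d' + 1), |x j - (if (j : ℕ) = (i : ℕ) then s i else 0)| ^ p :=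
      Finset.sum_nonneg fun j _ => Real.rpow_nonneg (abs_nonneg _) _
    have hle := Real.rpow_le_rpow (Real.rpow_nonneg hA0 _) h2i hp0.le
    rw [one_div, Real.rpow_inv_rpow hA0 (ne_of_gt hp0)] at hle
    rw [hA] at hle
    exact hle
  have sum1 : ∑ i : Fin d',
      (|x (Fin.castSucc i) - s i| ^ p + (S - |x (Fin.castSucc i)| ^ p)) ≤ (d' : ℝ) * r ^ p := by
    calc ∑ i : Fin d', (|x (Fin.castSucc i) - s i| ^ p + (S - |x (Fin.castSucc i)| ^ p))
        ≤ ∑ _i : Fin d', r ^ p := Finset.sum_le_sum fun i _ => key1 i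
      _ = (d' : ℝ) * r ^ p := by
          rw [Finset.sum_const, Finset.card_univ, Fintype.card_fin, nsmul_eq_mul]
  set L : ℝ := |x (Fin.last d')| ^ p with hL
  have hSsplit : S = (∑ i : Fin d', |x (Fin.castSucc i)| ^ p) + L := Fin.sum_univ_castSucc _
  have hL0 : 0 ≤ L := Real.rpow_nonneg (abs_nonneg _) _
  set T : Fin d' → ℝ := fun i => |x (Fin.castSucc i) - s i| ^ p + m * |x (Fin.castSucc i)| ^ p
    with hT
  have sum2 : (∑ i, T i) + (d' : ℝ) * L ≤ (d' : ℝ) * r ^ p := by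
    have expand : ∑ i : Fin d',
        (|x (Fin.castSucc i) - s i| ^ p + (S - |x (Fin.castSucc i)| ^ p))
          = (∑ i, T i) + (d' : ℝ) * L := by
      rw [Finset.sum_add_distrib, Finset.sum_sub_distrib, Finset.sum_const, Finset.card_univ,
        Fintype.card_fin, nsmul_eq_mul, hSsplit]
      simp only [hT]
      rw [Finset.sum_add_distrib, ← Finset.mul_sum]
      rw [hmdef]; ring
    linarith [sum1, expand.symm.le, expand.le]
  have hTg : ∀ i : Fin d', T i
      = |1 - s i * x (Fin.castSucc i)| ^ p + m * |s i * x (Fin.castSucc i)| ^ p := by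
    intro i
    rcases hs i with h | h
    · simp only [hT]
      rw [h, one_mul, abs_sub_comm]
    · simp only [hT]
      rw [h, neg_one_mul, abs_neg, sub_neg_eq_add, sub_neg_eq_add,
        add_comm (x (Fin.castSucc i)) 1]
  have hTge : ∀ i : Fin d', r ^ p ≤ T i := by
    intro i
    rw [hrp, hTg i]
    rcases eq_or_ne (s i * x (Fin.castSucc i)) c with he | hne
    · rw [he, abs_of_pos hc0, abs_of_pos (by linarith : (0:ℝ) < 1 - c)]
      linarith
    · have := g_strict p m c hp hm1 hc hne
      linarith
  have sumT_ge : (d' : ℝ) * r ^ p ≤ ∑ i, T i := by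
    calc (d' : ℝ) * r ^ p = ∑ _i : Fin d', r ^ p := by
          rw [Finset.sum_const, Finset.card_univ, Fintype.card_fin, nsmul_eq_mul]
      _ ≤ ∑ i, T i := Finset.sum_le_sum fun i _ => hTge i
  have hd0 : (0 : ℝ) < (d' : ℝ) := by linarith
  have hLzero : L = 0 := by nlinarith [sum2, sumT_ge, hL0, hd0]
  have hsum_eq : ∑ _i : Fin d', r ^ p = ∑ i, T i := by
    have hcst : ∑ _i : Fin d', r ^ p = (d' : ℝ) * r ^ p := by
      rw [Finset.sum_const, Finset.card_univ, Fintype.card_fin, nsmul_eq_mul]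
    have h2' : (∑ i, T i) ≤ (d' : ℝ) * r ^ p := by
      rw [hLzero] at sum2; linarith
    have hge : ∑ _i : Fin d', r ^ p ≤ ∑ i, T i :=
      Finset.sum_le_sum fun i _ => hTge i
    linarith
  have hTeq := (Finset.sum_eq_sum_iff_of_le (fun (i : Fin d') _ => hTge i)).mp hsum_eq
  constructor
  · intro i
    have hteq := (hTeq i (Finset.mem_univ i)).symm
    by_contra hne0
    have hne : s i * x (Fin.castSucc i) ≠ c := by
      intro hcontra
      apply hne0
      rcases hs i with h' | h' <;> rw [h'] at hcontra ⊢ <;> nlinarith [hcontra]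
    have hstrict := g_strict p m c hp hm1 hc hne
    rw [hTg i, hrp] at hteq
    linarith
  · have habs : |x (Fin.last d')| ^ p = 0 := hLzero
    exact abs_eq_zero.mp ((Real.rpow_eq_zero (abs_nonneg _) (ne_of_gt hp0)).mp habs)
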